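/- In the Ellentuck topology on [ω]^ω, every meager set is nowhere dense. -/
import Mathlib

/-- The space `[ω]^ω` of infinite subsets of `ℕ`. -/
def EllSpace : Type := {S : Set ℕ // S.Infinite}

/-- The basic Ellentuck set `[a, A] = {S : a ⊆ S ⊆ a ∪ A}`. -/
def EllBasic (a : Finset ℕ) (A : Set ℕ) : Set EllSpace :=
  {S | ↑a ⊆ S.1 ∧ S.1 ⊆ ↑a ∪ A}

/-- The Ellentuck topology on `[ω]^ω`, generated by the sets `[a, A]` with
`A` infinite and every element of `a` below every element of `A`. -/
instance : TopologicalSpace EllSpace :=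
  TopologicalSpace.generateFrom
    {U | ∃ (a : Finset ℕ) (A : Set ℕ), A.Infinite ∧
      (∀ x ∈ a, ∀ y ∈ A, x < y) ∧ U = EllBasic a A}

attribute [instance 2000] instTopologicalSpaceEllSpace

/-! ### Basic auxiliary lemmas -/

/-- `a < A` elementwise. -/
def EllBnd (a : Finset ℕ) (A : Set ℕ) : Prop := ∀ x ∈ a, ∀ y ∈ A, x < y

lemma ellBasic_mono {a b : Finset ℕ} {A B : Set ℕ} (hab : a ⊆ b)
    (h : ↑b ∪ B ⊆ ↑a ∪ A) : EllBasic b B ⊆ EllBasic a A := by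
  rintro S ⟨h1, h2⟩
  exact ⟨(Finset.coe_subset.2 hab).trans h1, h2.trans h⟩

lemma ellBasic_mono_set {a : Finset ℕ} {A B : Set ℕ} (h : B ⊆ A) :
    EllBasic a B ⊆ EllBasic a A :=
  ellBasic_mono (Finset.Subset.refl a) (Set.union_subset_union_right _ h)

lemma ellUnion_infinite {a : Finset ℕ} {A : Set ℕ} (hA : A.Infinite) :
    (↑a ∪ A : Set ℕ).Infinite := hA.mono Set.subset_union_right

lemma mem_ellBasic_self {a : Finset ℕ} {A : Set ℕ} (hA : A.Infinite) :
    (⟨↑a ∪ A, ellUnion_infinite hA⟩ : EllSpace) ∈ EllBasic a A :=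
  ⟨Set.subset_union_left, subset_rfl⟩

lemma isOpen_ellBasic {a : Finset ℕ} {A : Set ℕ} (hA : A.Infinite) (hb : EllBnd a A) :
    IsOpen (EllBasic a A) :=
  TopologicalSpace.GenerateOpen.basic _ ⟨a, A, hA, hb, rfl⟩

lemma inter_Ioi_infinite {C : Set ℕ} (hC : C.Infinite) (n : ℕ) :
    (C ∩ Set.Ioi n).Infinite := by
  have : C \ Set.Iic n = C ∩ Set.Ioi n := by
    ext x; simp [Set.mem_Iic, Set.mem_Ioi, not_le]
  exact this ▸ hC.diff (Set.finite_Iic n)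

/-- Combining two basic neighbourhoods of a common point. -/
lemma ellCombine {a c : Finset ℕ} {A C : Set ℕ} {S : EllSpace}
    (hSa : S ∈ EllBasic a A) (hSc : S ∈ EllBasic c C) :
    ∃ (c' : Finset ℕ) (C' : Set ℕ), C'.Infinite ∧ EllBnd c' C' ∧
      S ∈ EllBasic c' C' ∧ a ⊆ c' ∧ c ⊆ c' ∧ ↑c' ⊆ S.1 ∧ C' ⊆ A ∧ C' ⊆ C := by
  classical
  set N : ℕ := (a ∪ c).sup id with hN
  have hle : ∀ x ∈ a ∪ c, x ≤ N := fun x hx => Finset.le_sup (f := id) hx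
  have hfin : (S.1 ∩ Set.Iic N).Finite := (Set.finite_Iic N).subset Set.inter_subset_right
  set c' : Finset ℕ := hfin.toFinset with hc'
  set C' : Set ℕ := A ∩ C ∩ Set.Ioi N with hC'
  have hc'mem : ∀ x, x ∈ c' ↔ x ∈ S.1 ∧ x ≤ N := by
    intro x; simp [hc', Set.Finite.mem_toFinset]
  have hhigh : ∀ x, x ∈ S.1 → N < x → x ∈ C' := by
    intro x hxS hxN
    have hxa : x ∉ (a : Set ℕ) := fun h => absurd (hle x (Finset.mem_union_left _ h)) (not_le.2 hxN)
    have hxc : x ∉ (c : Set ℕ) := fun h => absurd (hle x (Finset.mem_union_right _ h)) (not_le.2 hxN)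
    have hxA : x ∈ A := (hSa.2 hxS).resolve_left hxa
    have hxC : x ∈ C := (hSc.2 hxS).resolve_left hxc
    exact ⟨⟨hxA, hxC⟩, hxN⟩
  refine ⟨c', C', ?_, ?_, ⟨?_, ?_⟩, ?_, ?_, ?_, ?_, ?_⟩
  · have : S.1 ∩ Set.Ioi N ⊆ C' := fun x hx => hhigh x hx.1 hx.2
    exact (inter_Ioi_infinite S.2 N).mono this
  · intro x hx y hy
    exact lt_of_le_of_lt ((hc'mem x).1 hx).2 hy.2
  · intro x hx; exact ((hc'mem x).1 hx).1
  · intro x hx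
    by_cases hxN : x ≤ N
    · exact Or.inl ((hc'mem x).2 ⟨hx, hxN⟩)
    · exact Or.inr (hhigh x hx (not_le.1 hxN))
  · intro x hx
    exact (hc'mem x).2 ⟨hSa.1 hx, hle x (Finset.mem_union_left _ hx)⟩
  · intro x hx
    exact (hc'mem x).2 ⟨hSc.1 hx, hle x (Finset.mem_union_right _ hx)⟩
  · intro x hx; exact ((hc'mem x).1 hx).1
  · exact fun x hx => hx.1.1
  · exact fun x hx => hx.1.2

/-- Every open set contains a basic neighbourhood of each of its points. -/
lemma exists_basic_nhd {U : Set EllSpace} (hU : IsOpen U) :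
    ∀ S ∈ U, ∃ (a : Finset ℕ) (A : Set ℕ), A.Infinite ∧ EllBnd a A ∧
      S ∈ EllBasic a A ∧ EllBasic a A ⊆ U := by
  have hU' : TopologicalSpace.GenerateOpen
      {V | ∃ (a : Finset ℕ) (A : Set ℕ), A.Infinite ∧
        (∀ x ∈ a, ∀ y ∈ A, x < y) ∧ V = EllBasic a A} U := hU
  induction hU' with
  | basic V hV =>
      obtain ⟨a, A, hA, hb, rfl⟩ := hV
      exact fun S hS => ⟨a, A, hA, hb, hS, subset_rfl⟩
  | univ =>
      intro S _
      exact ⟨∅, S.1, S.2, by simp [EllBnd], ⟨by simp, by simp⟩, Set.subset_univ _⟩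
  | inter U₁ U₂ h1 h2 ih1 ih2 =>
      intro S hS
      obtain ⟨a, A, hA, hba, hSa, hsa⟩ := ih1 h1 S hS.1
      obtain ⟨c, C, hC, hbc, hSc, hsc⟩ := ih2 h2 S hS.2
      obtain ⟨c', C', k1, k2, k3, k4, k5, k6, k7, k8⟩ := ellCombine hSa hSc
      refine ⟨c', C', k1, k2, k3, fun T hT => ⟨?_, ?_⟩⟩
      · exact hsa (ellBasic_mono k4 (Set.union_subset (k6.trans hSa.2)
          (k7.trans Set.subset_union_right)) hT)
      · exact hsc (ellBasic_mono k5 (Set.union_subset (k6.trans hSc.2)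
          (k8.trans Set.subset_union_right)) hT)
  | sUnion 𝒮 h ih =>
      intro S hS
      obtain ⟨V, hV, hSV⟩ := hS
      obtain ⟨a, A, hA, hb, hSa, hsub⟩ := ih V hV (h V hV) S hSV
      exact ⟨a, A, hA, hb, hSa, hsub.trans (Set.subset_sUnion_of_mem hV)⟩
/-! ### A generic fusion-sequence builder -/

structure SeqB (B : Set ℕ) (Inv : Finset ℕ → Set ℕ → Prop) where
  ns : ℕ → ℕ
  Bs : ℕ → Set ℕ
  bs0 : Bs 0 = B
  inf : ∀ k, (Bs k).Infinite
  subB : ∀ k, Bs k ⊆ B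
  mem : ∀ k, ns k ∈ Bs k
  succ_sub : ∀ k, Bs (k + 1) ⊆ Bs k
  succ_lt : ∀ k, ∀ d ∈ Bs (k + 1), ns k < d
  inv : ∀ k, Inv ((Finset.range k).image ns) (Bs k)

lemma seq_build {B : Set ℕ} (hB : B.Infinite) (Inv : Finset ℕ → Set ℕ → Prop)
    (base : Inv ∅ B)
    (H : ∀ (h : Finset ℕ) (C : Set ℕ), C.Infinite → C ⊆ B → Inv h C →
      ∃ n D, n ∈ C ∧ D ⊆ C ∧ D.Infinite ∧ (∀ d ∈ D, n < d) ∧ Inv (insert n h) D) :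
    Nonempty (SeqB B Inv) := by
  classical
  let St := {p : Finset ℕ × Set ℕ // p.2.Infinite ∧ p.2 ⊆ B ∧ Inv p.1 p.2}
  have Hs : ∀ s : St, ∃ n D, n ∈ s.1.2 ∧ D ⊆ s.1.2 ∧ D.Infinite ∧ (∀ d ∈ D, n < d) ∧
      Inv (insert n s.1.1) D := by
    rintro ⟨⟨h, C⟩, hCinf, hCB, hInv⟩
    exact H h C hCinf hCB hInv
  choose nx Dx hx1 hx2 hx3 hx4 hx5 using Hs
  let step : St → St := fun s =>
    ⟨(insert (nx s) s.1.1, Dx s), hx3 s, (hx2 s).trans s.2.2.1, hx5 s⟩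
  let F : ℕ → St := fun k => Nat.rec ⟨(∅, B), hB, subset_rfl, base⟩ (fun _ s => step s) k
  have hFs : ∀ k, F (k + 1) = step (F k) := fun k => rfl
  let ns : ℕ → ℕ := fun k => nx (F k)
  let Bs : ℕ → Set ℕ := fun k => (F k).1.2
  have hsucc : ∀ k, Bs (k + 1) = Dx (F k) := fun k => by rw [show Bs (k+1) = (F (k+1)).1.2 from rfl, hFs k]
  have hhist : ∀ k, (F k).1.1 = (Finset.range k).image ns := by
    intro k
    induction k with
    | zero => simp [F]
    | succ k ih =>
        have : (F (k + 1)).1.1 = insert (nx (F k)) (F k).1.1 := by rw [hFs k]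
        rw [this, ih, Finset.range_add_one, Finset.image_insert]
  refine ⟨⟨ns, Bs, rfl, fun k => (F k).2.1, fun k => (F k).2.2.1, fun k => hx1 (F k),
    fun k => ?_, fun k => ?_, fun k => ?_⟩⟩
  · rw [hsucc k]; exact hx2 (F k)
  · rw [hsucc k]; exact hx4 (F k)
  · have := (F k).2.2.2; rwa [hhist k] at this

namespace SeqB

variable {B : Set ℕ} {Inv : Finset ℕ → Set ℕ → Prop} (s : SeqB B Inv)

lemma sub_of_le {k j : ℕ} (h : k ≤ j) : s.Bs j ⊆ s.Bs k := by
  induction j, h using Nat.le_induction with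
  | base => exact subset_rfl
  | succ j hj ih => exact (s.succ_sub j).trans ih

lemma mem_of_le {k j : ℕ} (h : k ≤ j) : s.ns j ∈ s.Bs k := s.sub_of_le h (s.mem j)

lemma strictMono : StrictMono s.ns :=
  strictMono_nat_of_lt_succ fun k => s.succ_lt k _ (s.mem (k + 1))

lemma range_sub : Set.range s.ns ⊆ B := by
  rintro x ⟨k, rfl⟩; exact s.subB k (s.mem k)

lemma mem_succ_of_lt {k j : ℕ} (h : k < j) : s.ns j ∈ s.Bs (k + 1) := s.mem_of_le h

end SeqB
/-! ### Good pairs and the key one-step lemma -/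

/-- `(b, B)` is good for `X` if some `[b, C]` with `C ⊆ B` avoids `X`. -/
def EllGood (X : Set EllSpace) (b : Finset ℕ) (B : Set ℕ) : Prop :=
  ∃ C, C ⊆ B ∧ C.Infinite ∧ EllBnd b C ∧ EllBasic b C ∩ X = ∅

lemma EllGood.mono {X : Set EllSpace} {b : Finset ℕ} {B B' : Set ℕ}
    (h : EllGood X b B) (hBB : B ⊆ B') : EllGood X b B' := by
  obtain ⟨C, h1, h2, h3, h4⟩ := h
  exact ⟨C, h1.trans hBB, h2, h3, h4⟩

lemma ellDisj_mono {X : Set EllSpace} {b : Finset ℕ} {C D : Set ℕ} (hDC : D ⊆ C)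
    (h : EllBasic b C ∩ X = ∅ ∨ ¬ EllGood X b C) :
    EllBasic b D ∩ X = ∅ ∨ ¬ EllGood X b D := by
  rcases h with h | h
  · exact Or.inl (Set.eq_empty_of_subset_empty
      (h ▸ Set.inter_subset_inter_left X (ellBasic_mono_set hDC)))
  · exact Or.inr fun hg => h (hg.mono hDC)

/-- If `(b, B)` is bad for `X`, there is `C ⊆ B` all of whose one-point
extensions are bad. -/
lemma key1 (X : Set EllSpace) {b : Finset ℕ} {B : Set ℕ} (hB : B.Infinite)
    (hbnd : EllBnd b B) (hbad : ¬ EllGood X b B) :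
    ∃ C, C ⊆ B ∧ C.Infinite ∧
      ∀ n ∈ C, ¬ EllGood X (insert n b) (C ∩ Set.Ioi n) := by
  classical
  have hbuild := seq_build hB
    (fun h C => ∀ n ∈ h, EllBasic (insert n b) C ∩ X = ∅ ∨ ¬ EllGood X (insert n b) C)
    (by simp)
    (by
      intro h C hCinf hCB hInv
      obtain ⟨n, hn⟩ := hCinf.nonempty
      by_cases hg : EllGood X (insert n b) (C ∩ Set.Ioi n)
      · obtain ⟨D, hD1, hD2, hD3, hD4⟩ := hg
        refine ⟨n, D, hn, hD1.trans Set.inter_subset_left, hD2,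
          fun d hd => (hD1 hd).2, ?_⟩
        intro n' hn'
        rcases Finset.mem_insert.1 hn' with rfl | hn'
        · exact Or.inl hD4
        · exact ellDisj_mono (hD1.trans Set.inter_subset_left) (hInv n' hn')
      · refine ⟨n, C ∩ Set.Ioi n, hn, Set.inter_subset_left, inter_Ioi_infinite hCinf n,
          fun d hd => hd.2, ?_⟩
        intro n' hn'
        rcases Finset.mem_insert.1 hn' with rfl | hn'
        · exact Or.inr hg
        · exact ellDisj_mono Set.inter_subset_left (hInv n' hn'))
  obtain ⟨s⟩ := hbuild
  have hdisj : ∀ k, EllBasic (insert (s.ns k) b) (s.Bs (k + 1)) ∩ X = ∅ ∨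
      ¬ EllGood X (insert (s.ns k) b) (s.Bs (k + 1)) := by
    intro k
    have := s.inv (k + 1) (s.ns k)
      (Finset.mem_image_of_mem _ (Finset.mem_range.2 (Nat.lt_succ_self k)))
    exact this
  by_cases hK : {k | EllBasic (insert (s.ns k) b) (s.Bs (k + 1)) ∩ X = ∅}.Infinite
  · exfalso
    apply hbad
    set K := {k | EllBasic (insert (s.ns k) b) (s.Bs (k + 1)) ∩ X = ∅} with hKdef
    refine ⟨s.ns '' K, ?_, hK.image (s.strictMono.injective.injOn), ?_, ?_⟩
    · rintro x ⟨k, _, rfl⟩; exact s.subB k (s.mem k)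
    · rintro x hx y ⟨k, _, rfl⟩; exact hbnd x hx _ (s.subB k (s.mem k))
    · rw [Set.eq_empty_iff_forall_notMem]
      rintro T ⟨⟨hT1, hT2⟩, hTX⟩
      have hTne : (T.1 \ ↑b).Nonempty := (T.2.diff b.finite_toSet).nonempty
      set m := sInf (T.1 \ ↑b) with hm
      have hmmem : m ∈ T.1 \ ↑b := Nat.sInf_mem hTne
      have hmK : m ∈ s.ns '' K := (hT2 hmmem.1).resolve_left hmmem.2
      obtain ⟨k, hkK, hkm⟩ := hmK
      have hTmem : T ∈ EllBasic (insert (s.ns k) b) (s.Bs (k + 1)) := by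
        constructor
        · intro x hx
          rcases Finset.mem_insert.1 (by exact_mod_cast hx) with rfl | hx
          · exact hkm ▸ hmmem.1
          · exact hT1 (Finset.mem_coe.2 hx)
        · intro x hxT
          rcases hT2 hxT with hx | hx
          · exact Or.inl (by simpa using Or.inr (Finset.mem_coe.1 hx))
          · obtain ⟨j, hjK, rfl⟩ := hx
            have hjb : s.ns j ∉ (↑b : Set ℕ) := fun hmem =>
              lt_irrefl _ (hbnd _ hmem _ (s.subB j (s.mem j)))
            have hle : m ≤ s.ns j := Nat.sInf_le ⟨hxT, hjb⟩
            rcases eq_or_lt_of_le hle with heq | hlt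
            · exact Or.inl (by simp [← heq, ← hkm])
            · have : k < j := s.strictMono.lt_iff_lt.1 (hkm ▸ hlt)
              exact Or.inr (s.mem_succ_of_lt this)
      exact Set.eq_empty_iff_forall_notMem.1 hkK T ⟨hTmem, hTX⟩
  · rw [Set.not_infinite] at hK
    obtain ⟨k₀, hk₀⟩ : ∃ k₀, ∀ k, k₀ ≤ k →
        ¬ EllBasic (insert (s.ns k) b) (s.Bs (k + 1)) ∩ X = ∅ := by
      rcases hK.bddAbove with ⟨m, hm⟩
      exact ⟨m + 1, fun k hk hmem => by
        have := hm hmem; omega⟩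
    refine ⟨s.ns '' Set.Ici k₀, ?_, (Set.Ici_infinite k₀).image (s.strictMono.injective.injOn), ?_⟩
    · rintro x ⟨k, _, rfl⟩; exact s.subB k (s.mem k)
    · rintro n ⟨k, hk, rfl⟩ hg
      have hsub : s.ns '' Set.Ici k₀ ∩ Set.Ioi (s.ns k) ⊆ s.Bs (k + 1) := by
        rintro x ⟨⟨j, _, rfl⟩, hxk⟩
        exact s.mem_succ_of_lt (s.strictMono.lt_iff_lt.1 hxk)
      exact (hdisj k).resolve_left (hk₀ k hk) (hg.mono hsub)
/-! ### The fusion lemma -/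

lemma ext_list (Q : Finset ℕ → Set ℕ → Prop)
    (mono : ∀ (b : Finset ℕ) (B C : Set ℕ), C ⊆ B → Q b B → Q b C)
    (ext : ∀ (b : Finset ℕ) (B : Set ℕ), B.Infinite → EllBnd b B → Q b B →
      ∃ C, C ⊆ B ∧ C.Infinite ∧ ∀ n ∈ C, Q (insert n b) (C ∩ Set.Ioi n)) :
    ∀ (L : List (Finset ℕ)) (C : Set ℕ), C.Infinite → (∀ b ∈ L, EllBnd b C ∧ Q b C) →
      ∃ D, D ⊆ C ∧ D.Infinite ∧ ∀ b ∈ L, ∀ n ∈ D, Q (insert n b) (D ∩ Set.Ioi n) := by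
  intro L
  induction L with
  | nil => exact fun C hC _ => ⟨C, subset_rfl, hC, by simp⟩
  | cons b L ih =>
      intro C hC hL
      obtain ⟨C₁, hC₁C, hC₁inf, hC₁⟩ := ext b C hC (hL b (by simp)).1 (hL b (by simp)).2
      obtain ⟨D, hDC₁, hDinf, hD⟩ := ih C₁ hC₁inf (fun b' hb' =>
        ⟨fun x hx y hy => (hL b' (by simp [hb'])).1 x hx y (hC₁C hy),
         mono _ _ _ hC₁C (hL b' (by simp [hb'])).2⟩)
      refine ⟨D, hDC₁.trans hC₁C, hDinf, ?_⟩
      intro b' hb' n hn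
      rcases List.mem_cons.1 hb' with rfl | hb'
      · exact mono _ _ _ (Set.inter_subset_inter_left _ hDC₁) (hC₁ n (hDC₁ hn))
      · exact hD b' hb' n hn

lemma fusion (Q : Finset ℕ → Set ℕ → Prop)
    (mono : ∀ (b : Finset ℕ) (B C : Set ℕ), C ⊆ B → Q b B → Q b C)
    (ext : ∀ (b : Finset ℕ) (B : Set ℕ), B.Infinite → EllBnd b B → Q b B →
      ∃ C, C ⊆ B ∧ C.Infinite ∧ ∀ n ∈ C, Q (insert n b) (C ∩ Set.Ioi n))
    {a : Finset ℕ} {A : Set ℕ} (hA : A.Infinite) (hbnd : EllBnd a A) (hQ : Q a A) :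
    ∃ B, B ⊆ A ∧ B.Infinite ∧ EllBnd a B ∧
      ∀ b : Finset ℕ, a ⊆ b → ↑b ⊆ ↑a ∪ B →
        Q b {y ∈ B | ∀ x ∈ b, x < y} := by
  classical
  have hbuild := seq_build hA
    (fun h C => (∀ x ∈ h, ∀ y ∈ C, x < y) ∧
      ∀ b : Finset ℕ, a ⊆ b → b ⊆ a ∪ h → Q b C)
    (by
      refine ⟨by simp, fun b hab hba => ?_⟩
      have : b = a := Finset.Subset.antisymm (by simpa using hba) hab
      exact this ▸ hQ)
    (by
      intro h C hCinf hCA hInv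
      obtain ⟨hbndh, hQs⟩ := hInv
      set L : List (Finset ℕ) := ((a ∪ h).powerset.filter (fun b => a ⊆ b)).toList with hL
      have hmemL : ∀ b : Finset ℕ, b ∈ L ↔ b ⊆ a ∪ h ∧ a ⊆ b := by
        intro b
        rw [hL, Finset.mem_toList, Finset.mem_filter, Finset.mem_powerset]
      have hbndC : ∀ b : Finset ℕ, b ⊆ a ∪ h → EllBnd b C := by
        intro b hb x hx y hy
        rcases Finset.mem_union.1 (hb hx) with hx' | hx'
        · exact hbnd x hx' y (hCA hy)
        · exact hbndh x hx' y hy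
      obtain ⟨D, hDC, hDinf, hD⟩ := ext_list Q mono ext L C hCinf
        (fun b hb => ⟨hbndC b ((hmemL b).1 hb).1, hQs b ((hmemL b).1 hb).2 ((hmemL b).1 hb).1⟩)
      obtain ⟨n, hn⟩ := hDinf.nonempty
      have hnC : n ∈ C := hDC hn
      have hna : n ∉ a := fun hmem => lt_irrefl n (hbnd n hmem n (hCA hnC))
      have hnh : n ∉ h := fun hmem => lt_irrefl n (hbndh n hmem n hnC)
      refine ⟨n, D ∩ Set.Ioi n, hnC, (Set.inter_subset_left).trans hDC,
        inter_Ioi_infinite hDinf n, fun d hd => hd.2, ?_, ?_⟩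
      · intro x hx y hy
        rcases Finset.mem_insert.1 hx with rfl | hx
        · exact hy.2
        · exact hbndh x hx y (hDC hy.1)
      · intro b hab hba
        by_cases hnb : n ∈ b
        · have hb0 : b.erase n ⊆ a ∪ h := by
            intro x hx
            have hxb := Finset.mem_of_mem_erase hx
            rcases Finset.mem_union.1 (hba hxb) with hx' | hx'
            · exact Finset.mem_union_left _ hx'
            · rcases Finset.mem_insert.1 hx' with rfl | hx'
              · exact absurd rfl (Finset.ne_of_mem_erase hx)
              · exact Finset.mem_union_right _ hx'
          have hab0 : a ⊆ b.erase n := fun x hx =>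
            Finset.mem_erase.2 ⟨fun hxe => hna (hxe ▸ hx), hab hx⟩
          have hbL : b.erase n ∈ L := (hmemL _).2 ⟨hb0, hab0⟩
          have := hD (b.erase n) hbL n hn
          rwa [Finset.insert_erase hnb] at this
        · have hb0 : b ⊆ a ∪ h := by
            intro x hx
            rcases Finset.mem_union.1 (hba hx) with hx' | hx'
            · exact Finset.mem_union_left _ hx'
            · rcases Finset.mem_insert.1 hx' with rfl | hx'
              · exact absurd hx hnb
              · exact Finset.mem_union_right _ hx'
          exact mono _ _ _ ((Set.inter_subset_left).trans hDC) (hQs b hab hb0))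
  obtain ⟨s⟩ := hbuild
  refine ⟨Set.range s.ns, s.range_sub, Set.infinite_range_of_injective s.strictMono.injective,
    fun x hx y hy => hbnd x hx y (s.range_sub hy), ?_⟩
  intro b hab hba
  set tail := {y ∈ Set.range s.ns | ∀ x ∈ b, x < y} with htail
  have key : ∀ k, b ⊆ a ∪ (Finset.range k).image s.ns → tail ⊆ s.Bs k → Q b tail := by
    intro k h1 h2
    exact mono _ _ _ h2 ((s.inv k).2 b hab h1)
  by_cases hT : ∃ j, s.ns j ∈ b
  · have hTfin : {j | s.ns j ∈ b}.Finite :=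
      Set.Finite.preimage (s.strictMono.injective.injOn) b.finite_toSet
    have hTne : hTfin.toFinset.Nonempty := by
      obtain ⟨j, hj⟩ := hT
      exact ⟨j, by simpa [Set.Finite.mem_toFinset] using hj⟩
    set j₀ := hTfin.toFinset.max' hTne with hj₀
    have hj₀mem : s.ns j₀ ∈ b := by
      have := hTfin.toFinset.max'_mem hTne
      simpa [Set.Finite.mem_toFinset] using this
    apply key (j₀ + 1)
    · intro x hx
      rcases hba hx with hx' | hx'
      · exact Finset.mem_union_left _ (by exact_mod_cast hx')
      · obtain ⟨j, rfl⟩ := hx'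
        have hjT : j ∈ hTfin.toFinset := by
          simpa [Set.Finite.mem_toFinset] using hx
        have : j ≤ j₀ := hTfin.toFinset.le_max' j hjT
        exact Finset.mem_union_right _
          (Finset.mem_image_of_mem _ (Finset.mem_range.2 (by omega)))
    · rintro y ⟨⟨j, rfl⟩, hyb⟩
      have : j₀ < j := s.strictMono.lt_iff_lt.1 (hyb _ hj₀mem)
      exact s.mem_of_le this
  · push_neg at hT
    apply key 0
    · intro x hx
      rcases hba hx with hx' | hx'
      · exact Finset.mem_union_left _ (by exact_mod_cast hx')
      · obtain ⟨j, rfl⟩ := hx'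
        exact absurd (by exact_mod_cast hx) (hT j)
    · rintro y ⟨⟨j, rfl⟩, -⟩
      rw [s.bs0]
      exact s.range_sub ⟨j, rfl⟩
/-! ### Nowhere dense sets are Ramsey null -/

/-- Inside every basic set there is a basic set avoiding `X`. -/
def DenseCompl (X : Set EllSpace) : Prop :=
  ∀ (a : Finset ℕ) (A : Set ℕ), A.Infinite → EllBnd a A →
    ∃ (c : Finset ℕ) (C : Set ℕ), C.Infinite ∧ EllBnd c C ∧
      EllBasic c C ⊆ EllBasic a A ∧ EllBasic c C ∩ X = ∅

lemma lemmaA {X : Set EllSpace} (hX : DenseCompl X) {a : Finset ℕ} {A : Set ℕ}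
    (hA : A.Infinite) (hbnd : EllBnd a A) : EllGood X a A := by
  by_contra hbad
  obtain ⟨B, hBA, hBinf, hBbnd, hmain⟩ := fusion (fun b B => ¬ EllGood X b B)
    (fun b B C hCB h hg => h (hg.mono hCB))
    (fun b B hB hbnd' h => key1 X hB hbnd' h)
    hA hbnd hbad
  obtain ⟨c, C, hCinf, hcC, hsub, hCX⟩ := hX a B hBinf hBbnd
  have hSC : (⟨↑c ∪ C, ellUnion_infinite hCinf⟩ : EllSpace) ∈ EllBasic c C :=
    mem_ellBasic_self hCinf
  have hSB : (⟨↑c ∪ C, ellUnion_infinite hCinf⟩ : EllSpace) ∈ EllBasic a B := hsub hSC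
  obtain ⟨c', C', k1, k2, k3, k4, k5, k6, k7, k8⟩ := ellCombine hSB hSC
  apply hmain c' k4 (k6.trans hSB.2)
  refine ⟨C', fun y hy => ⟨k7 hy, fun x hx => k2 x hx y hy⟩, k1, k2, ?_⟩
  rw [Set.eq_empty_iff_forall_notMem]
  rintro T ⟨hT1, hT2⟩
  have : T ∈ EllBasic c C := ellBasic_mono k5
    (Set.union_subset (k6.trans hSC.2) (k8.trans Set.subset_union_right)) hT1
  exact Set.eq_empty_iff_forall_notMem.1 hCX T ⟨this, hT2⟩

lemma lemmaA_multi (Xc : ℕ → Set EllSpace) (hXc : ∀ m, DenseCompl (Xc m)) :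
    ∀ (M : ℕ) (b : Finset ℕ) (B : Set ℕ), B.Infinite → EllBnd b B →
      ∃ C, C ⊆ B ∧ C.Infinite ∧ EllBnd b C ∧
        ∀ m ≤ M, EllBasic b C ∩ Xc m = ∅ := by
  intro M
  induction M with
  | zero =>
      intro b B hB hbnd
      obtain ⟨C, h1, h2, h3, h4⟩ := lemmaA (hXc 0) hB hbnd
      exact ⟨C, h1, h2, h3, fun m hm => Nat.le_zero.1 hm ▸ h4⟩
  | succ M ih =>
      intro b B hB hbnd
      obtain ⟨C, h1, h2, h3, h4⟩ := ih b B hB hbnd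
      obtain ⟨C', g1, g2, g3, g4⟩ := lemmaA (hXc (M + 1)) h2 h3
      refine ⟨C', g1.trans h1, g2, g3, ?_⟩
      intro m hm
      rcases Nat.lt_succ_iff_lt_or_eq.1 (Nat.lt_succ_of_le hm) with hm' | rfl
      · have hmono : EllBasic b C' ⊆ EllBasic b C := ellBasic_mono_set g1
        exact Set.eq_empty_of_subset_empty ((h4 m (Nat.lt_succ_iff.1 hm')) ▸
          Set.inter_subset_inter_left _ hmono)
      · exact g4
/-! ### Countable unions -/

lemma lemmaB (Xc : ℕ → Set EllSpace) (hXc : ∀ m, DenseCompl (Xc m))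
    {a : Finset ℕ} {A : Set ℕ} (hA : A.Infinite) (hbnd : EllBnd a A) :
    ∃ B, B ⊆ A ∧ B.Infinite ∧ EllBnd a B ∧ ∀ m, EllBasic a B ∩ Xc m = ∅ := by
  classical
  set Q : Finset ℕ → Set ℕ → Prop :=
    fun b B => ∀ m, a.card + m < b.card → EllBasic b B ∩ Xc m = ∅ with hQdef
  have mono : ∀ (b : Finset ℕ) (B C : Set ℕ), C ⊆ B → Q b B → Q b C := by
    intro b B C hCB h m hm
    exact Set.eq_empty_of_subset_empty ((h m hm) ▸
      Set.inter_subset_inter_left _ (ellBasic_mono_set hCB))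
  have ext : ∀ (b : Finset ℕ) (B : Set ℕ), B.Infinite → EllBnd b B → Q b B →
      ∃ C, C ⊆ B ∧ C.Infinite ∧ ∀ n ∈ C, Q (insert n b) (C ∩ Set.Ioi n) := by
    intro b B hB hbnd' _
    have hbuild := seq_build hB
      (fun h C => ∀ n ∈ h, ∀ m ≤ b.card, EllBasic (insert n b) C ∩ Xc m = ∅)
      (by simp)
      (by
        intro h C hCinf hCB hInv
        obtain ⟨n, hn⟩ := hCinf.nonempty
        have hbnd'' : EllBnd (insert n b) (C ∩ Set.Ioi n) := by
          intro x hx y hy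
          rcases Finset.mem_insert.1 hx with rfl | hx
          · exact hy.2
          · exact hbnd' x hx y (hCB hy.1)
        obtain ⟨D, hD1, hD2, hD3, hD4⟩ := lemmaA_multi Xc hXc b.card (insert n b)
          (C ∩ Set.Ioi n) (inter_Ioi_infinite hCinf n) hbnd''
        refine ⟨n, D, hn, hD1.trans Set.inter_subset_left, hD2,
          fun d hd => (hD1 hd).2, ?_⟩
        intro n' hn' m hm
        rcases Finset.mem_insert.1 hn' with rfl | hn'
        · exact hD4 m hm
        · exact Set.eq_empty_of_subset_empty ((hInv n' hn' m hm) ▸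
            Set.inter_subset_inter_left _
            (ellBasic_mono_set (hD1.trans Set.inter_subset_left))))
    obtain ⟨s⟩ := hbuild
    refine ⟨Set.range s.ns, s.range_sub, Set.infinite_range_of_injective s.strictMono.injective, ?_⟩
    rintro n ⟨k, rfl⟩ m hm
    have hnb : s.ns k ∉ b := fun hmem =>
      lt_irrefl _ (hbnd' _ hmem _ (s.subB k (s.mem k)))
    have hcard : (insert (s.ns k) b).card = b.card + 1 := Finset.card_insert_of_notMem hnb
    have hmle : m ≤ b.card := by omega
    have hk := s.inv (k + 1) (s.ns k)
      (Finset.mem_image_of_mem _ (Finset.mem_range.2 (Nat.lt_succ_self k))) m hmle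
    have hsub : Set.range s.ns ∩ Set.Ioi (s.ns k) ⊆ s.Bs (k + 1) := by
      rintro x ⟨⟨j, rfl⟩, hxk⟩
      exact s.mem_of_le (s.strictMono.lt_iff_lt.1 hxk)
    exact Set.eq_empty_of_subset_empty
      ((Set.inter_subset_inter_left _ (ellBasic_mono_set hsub)).trans hk.subset)
  have hQa : Q a A := fun m hm => absurd hm (by omega)
  obtain ⟨B, hBA, hBinf, hBbnd, hmain⟩ := fusion Q mono ext hA hbnd hQa
  refine ⟨B, hBA, hBinf, hBbnd, ?_⟩
  intro m
  rw [Set.eq_empty_iff_forall_notMem]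
  rintro T ⟨⟨hT1, hT2⟩, hTX⟩
  -- pick `m + 1` elements of `T ∩ B` and cut below a bound
  have hTB : (T.1 ∩ B).Infinite := by
    have hsub : T.1 \ ↑a ⊆ T.1 ∩ B := fun x hx => ⟨hx.1, (hT2 hx.1).resolve_left hx.2⟩
    exact (T.2.diff a.finite_toSet).mono hsub
  obtain ⟨g, hg1, hg2⟩ := hTB.exists_subset_card_eq (m + 1)
  set N : ℕ := g.sup id + 1 with hN
  have hgle : ∀ x ∈ g, x < N := fun x hx =>
    Nat.lt_succ_of_le (Finset.le_sup (f := id) hx)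
  have hfin : (T.1 ∩ B ∩ Set.Iio N).Finite := (Set.finite_Iio N).subset Set.inter_subset_right
  set f : Finset ℕ := hfin.toFinset with hf
  have hfmem : ∀ x, x ∈ f ↔ x ∈ T.1 ∧ x ∈ B ∧ x < N := by
    intro x; simp [hf, Set.Finite.mem_toFinset, and_assoc]
  have hgf : g ⊆ f := fun x hx =>
    (hfmem x).2 ⟨(hg1 hx).1, (hg1 hx).2, hgle x hx⟩
  have hfcard : m + 1 ≤ f.card := hg2 ▸ Finset.card_le_card hgf
  set b : Finset ℕ := a ∪ f with hb
  have hdisj : Disjoint a f := by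
    rw [Finset.disjoint_left]
    intro x hxa hxf
    exact lt_irrefl x (hBbnd x hxa x ((hfmem x).1 hxf).2.1)
  have hbcard : a.card + m < b.card := by
    rw [hb, Finset.card_union_of_disjoint hdisj]; omega
  have hab : a ⊆ b := Finset.subset_union_left
  have hbB : ↑b ⊆ ↑a ∪ B := by
    intro x hx
    rcases Finset.mem_union.1 (by exact_mod_cast hx) with hx' | hx'
    · exact Or.inl (by exact_mod_cast hx')
    · exact Or.inr ((hfmem x).1 hx').2.1
  have hQb := hmain b hab hbB m hbcard
  have hTmem : T ∈ EllBasic b {y ∈ B | ∀ x ∈ b, x < y} := by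
    constructor
    · intro x hx
      rcases Finset.mem_union.1 (by exact_mod_cast hx) with hx' | hx'
      · exact hT1 (by exact_mod_cast hx')
      · exact ((hfmem x).1 hx').1
    · intro x hxT
      rcases hT2 hxT with hx | hx
      · exact Or.inl ((Finset.coe_subset.2 hab) hx)
      · by_cases hxN : x < N
        · exact Or.inl ((Finset.coe_subset.2 (Finset.subset_union_right (s₁ := a))) 
            (by exact_mod_cast (hfmem x).2 ⟨hxT, hx, hxN⟩))
        · refine Or.inr ⟨hx, ?_⟩
          intro y hy
          rcases Finset.mem_union.1 hy with hy' | hy'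
          · exact hBbnd y hy' x hx
          · exact lt_of_lt_of_le ((hfmem y).1 hy').2.2 (not_lt.1 hxN)
  exact Set.eq_empty_iff_forall_notMem.1 hQb T ⟨hTmem, hTX⟩
/-! ### From nowhere dense sets to the main theorem -/

lemma ellSp_interior_subset {s : Set EllSpace} : interior s ⊆ s :=
  interior_subset

lemma ellSp_mem_closure_iff {s : Set EllSpace} {x : EllSpace} :
    x ∈ closure s ↔ ∀ U, IsOpen U → x ∈ U → (U ∩ s).Nonempty :=
  mem_closure_iff

lemma denseCompl_of_nwd {X : Set EllSpace} (hX : IsNowhereDense X) :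
    DenseCompl (closure X) := by
  intro a A hA hbnd
  have hopen : IsOpen (EllBasic a A) := isOpen_ellBasic hA hbnd
  have hnotsub : ¬ EllBasic a A ⊆ closure X := by
    intro hsub
    have h1 : EllBasic a A ⊆ interior (closure X) := interior_maximal hsub hopen
    rw [hX] at h1
    exact h1 (mem_ellBasic_self hA)
  obtain ⟨T, hT1, hT2⟩ := Set.not_subset.1 hnotsub
  have hU : IsOpen (EllBasic a A ∩ (closure X)ᶜ) :=
    hopen.inter isClosed_closure.isOpen_compl
  obtain ⟨c, C, hC, hbc, hTc, hsub⟩ := exists_basic_nhd hU T ⟨hT1, hT2⟩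
  refine ⟨c, C, hC, hbc, fun S hS => (hsub hS).1, ?_⟩
  rw [Set.eq_empty_iff_forall_notMem]
  rintro S ⟨hS1, hS2⟩
  exact (hsub hS1).2 hS2

/-- In the Ellentuck topology, every meager set is nowhere dense. -/
theorem ellentuck_meagre_nowhereDense (S : Set EllSpace) (hS : IsMeagre S) :
    IsNowhereDense S := by
  classical
  rw [isMeagre_iff_countable_union_isNowhereDense] at hS
  obtain ⟨𝒮, hnwd, hcount, hsub⟩ := hS
  rcases 𝒮.eq_empty_or_nonempty with rfl | hne
  · have : S = ∅ := by simpa using hsub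
    rw [this, IsNowhereDense, closure_empty, interior_empty]
  obtain ⟨f, hf⟩ := Set.Countable.exists_eq_range hcount hne
  have hfnwd : ∀ n, IsNowhereDense (f n) := fun n => hnwd (f n) (hf ▸ ⟨n, rfl⟩)
  have hSsub : S ⊆ ⋃ n, closure (f n) := by
    refine hsub.trans ?_
    rw [hf, Set.sUnion_range]
    exact Set.iUnion_mono fun n => subset_closure
  have hdc : ∀ n, DenseCompl (closure (f n)) := fun n => denseCompl_of_nwd (hfnwd n)
  rw [IsNowhereDense, Set.eq_empty_iff_forall_notMem]
  intro S₀ hS₀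
  obtain ⟨a, A, hA, hbnd, hS₀a, hsubint⟩ :=
    exists_basic_nhd isOpen_interior S₀ hS₀
  obtain ⟨B, hBA, hBinf, hBbnd, hdisj⟩ := lemmaB (fun n => closure (f n)) hdc hA hbnd
  have hopenB : IsOpen (EllBasic a B) := isOpen_ellBasic hBinf hBbnd
  have hptB : (⟨↑a ∪ B, ellUnion_infinite hBinf⟩ : EllSpace) ∈ EllBasic a B :=
    mem_ellBasic_self hBinf
  have hptcl := ellSp_interior_subset
    (hsubint (ellBasic_mono (Finset.Subset.refl a)
      (Set.union_subset_union_right _ hBA) hptB))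
  obtain ⟨T, hTB, hTS⟩ := (ellSp_mem_closure_iff.1 hptcl) (EllBasic a B) hopenB hptB
  obtain ⟨n, hn⟩ := Set.mem_iUnion.1 (hSsub hTS)
  exact Set.eq_empty_iff_forall_notMem.1 (hdisj n) T ⟨hTB, hn⟩
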